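/- If a finite simple graph Γ admits a tree 2-spanner T, then the Bestvina–Brady group BB(Γ) is isomorphic to the right-angled Artin group A(T*), where T* is the dual graph of T. In particular, BB(Γ) is a right-angled Artin group. -/

import Mathlib

def raagRels {V : Type} (G : SimpleGraph V) : Set (FreeGroup V) :=
  {r | ∃ v w : V, G.Adj v w ∧
    r = FreeGroup.of v * FreeGroup.of w * (FreeGroup.of v)⁻¹ * (FreeGroup.of w)⁻¹}

/-- The right-angled Artin group of a simple graph. -/
abbrev RAAG {V : Type} (G : SimpleGraph V) : Type := PresentedGroup (raagRels G)

/-- The canonical generator of `RAAG G` corresponding to a vertex. -/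
def raagGen {V : Type} (G : SimpleGraph V) (v : V) : RAAG G :=
  PresentedGroup.of (rels := raagRels G) v

/-- The homomorphism `A(Γ) → ℤ` sending every vertex generator to `1`. -/
def bbgChar {V : Type} (G : SimpleGraph V) : RAAG G →* Multiplicative ℤ :=
  PresentedGroup.toGroup (f := fun _ : V => Multiplicative.ofAdd (1 : ℤ)) (by
    rintro r ⟨v, w, -, rfl⟩
    simp only [map_mul, map_inv, FreeGroup.lift_apply_of]
    group)

/-- The Bestvina–Brady group of a simple graph, as a subgroup of the RAAG. -/
def BBG {V : Type} (G : SimpleGraph V) : Subgroup (RAAG G) := (bbgChar G).ker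

/-- `T` is a tree 2-spanner of `G`. -/
def IsTree2Spanner {V : Type} (G T : SimpleGraph V) : Prop :=
  T ≤ G ∧ T.IsTree ∧ ∀ x y : V, T.dist x y ≤ 2 * G.dist x y

/-- The dual graph of a spanning tree `T` of `G`: vertices are the edges of `T`,
two of them being adjacent iff they are distinct and contained in a common triangle of `G`. -/
def dualGraph {V : Type} (G T : SimpleGraph V) : SimpleGraph ↥T.edgeSet :=
  SimpleGraph.fromRel (fun e f =>
    ∃ a b c : V, G.Adj a b ∧ G.Adj b c ∧ G.Adj a c ∧
      (e : Sym2 V) ∈ ({s(a, b), s(b, c), s(a, c)} : Set (Sym2 V)) ∧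
      (f : Sym2 V) ∈ ({s(a, b), s(b, c), s(a, c)} : Set (Sym2 V)))

namespace BBPf

open SimpleGraph

variable {V : Type} {T : SimpleGraph V}

section RootedTree

/-- chosen root -/
noncomputable def root (hc : T.Connected) : V := hc.nonempty.some

lemma dist_pos_of_ne (hc : T.Connected) {a b : V} (h : a ≠ b) : 0 < T.dist a b :=
  Nat.pos_of_ne_zero fun h0 => h (hc.dist_eq_zero_iff.mp h0)

/-- a geodesic path -/
lemma exists_geodesic_path (hc : T.Connected) (a b : V) :
    ∃ p : T.Walk a b, p.IsPath ∧ p.length = T.dist a b := by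
  classical
  obtain ⟨w, hw⟩ := hc.exists_walk_length_eq_dist a b
  refine ⟨w.bypass, w.bypass_isPath, le_antisymm ?_ (dist_le _)⟩
  exact hw ▸ w.length_bypass_le

/-- uniqueness of the closer neighbour in a tree -/
lemma closer_unique (hc : T.Connected) (ha : T.IsAcyclic) {a b b' : V} {r : V}
    (h1 : T.Adj a b) (h2 : T.Adj a b')
    (hd1 : T.dist b r + 1 = T.dist a r) (hd2 : T.dist b' r + 1 = T.dist a r) : b = b' := by
  classical
  obtain ⟨q, hq, hql⟩ := exists_geodesic_path hc b r
  obtain ⟨q', hq', hql'⟩ := exists_geodesic_path hc b' r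
  have hanq : a ∉ q.support := by
    intro hmem
    have := dist_le (q.dropUntil a hmem)
    have := q.length_dropUntil_le hmem
    omega
  have hanq' : a ∉ q'.support := by
    intro hmem
    have := dist_le (q'.dropUntil a hmem)
    have := q'.length_dropUntil_le hmem
    omega
  have hP : (SimpleGraph.Walk.cons h1 q).IsPath := hq.cons hanq
  have hP' : (SimpleGraph.Walk.cons h2 q').IsPath := hq'.cons hanq'
  have := ((isTree_iff_existsUnique_path.mp ⟨hc, ha⟩).2 a r).unique hP hP'
  have hgv : (SimpleGraph.Walk.cons h1 q).getVert 1 = (SimpleGraph.Walk.cons h2 q').getVert 1 := by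
    rw [this]
  simpa using hgv

lemma exists_parent (hc : T.Connected) {v r : V} (h : v ≠ r) :
    ∃ u, T.Adj v u ∧ T.dist u r + 1 = T.dist v r := by
  obtain ⟨w, hw⟩ := hc.exists_walk_length_eq_dist v r
  cases w with
  | nil => exact absurd rfl h
  | @cons _ m _ hadj q =>
    refine ⟨m, hadj, ?_⟩
    have h1 : T.dist m r ≤ q.length := dist_le q
    have h2 : T.dist v r ≤ T.dist v m + T.dist m r := hc.dist_triangle
    have h3 : T.dist v m = 1 := dist_eq_one_iff_adj.mpr hadj
    simp only [Walk.length_cons] at hw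
    omega

/-- the parent of a vertex (itself for the root) -/
noncomputable def parent (hc : T.Connected) (v : V) : V :=
  letI := Classical.dec (v = root hc)
  if h : v = root hc then v else (exists_parent hc h).choose

lemma parent_root (hc : T.Connected) : parent hc (root hc) = root hc := by
  rw [parent]; exact dif_pos rfl

lemma parent_adj (hc : T.Connected) {v : V} (h : v ≠ root hc) :
    T.Adj v (parent hc v) := by
  rw [parent, dif_neg h]; exact (exists_parent hc h).choose_spec.1

lemma parent_dist (hc : T.Connected) {v : V} (h : v ≠ root hc) :
    T.dist (parent hc v) (root hc) + 1 = T.dist v (root hc) := by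
  rw [parent, dif_neg h]; exact (exists_parent hc h).choose_spec.2

lemma parent_unique (hc : T.Connected) (ha : T.IsAcyclic) {v u : V} (hadj : T.Adj v u)
    (hd : T.dist u (root hc) + 1 = T.dist v (root hc)) : parent hc v = u := by
  have hv : v ≠ root hc := by
    intro hv
    rw [hv, dist_self] at hd
    omega
  exact closer_unique hc ha (parent_adj hc hv) hadj (parent_dist hc hv) hd

lemma adj_dist_cases (hc : T.Connected) (ha : T.IsAcyclic) {a b : V} (hadj : T.Adj a b) :
    T.dist b (root hc) + 1 = T.dist a (root hc) ∨
    T.dist a (root hc) + 1 = T.dist b (root hc) := by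
  classical
  set r := root hc with hr
  have h1 : T.dist a r ≤ T.dist a b + T.dist b r := hc.dist_triangle
  have h2 : T.dist b r ≤ T.dist b a + T.dist a r := hc.dist_triangle
  have h3 : T.dist a b = 1 := dist_eq_one_iff_adj.mpr hadj
  have h4 : T.dist b a = 1 := dist_eq_one_iff_adj.mpr hadj.symm
  have hne : T.dist a r ≠ T.dist b r := by
    intro heq
    set d := T.dist a r with hd
    have hdb : T.dist b r = d := heq.symm
    have hd0 : d ≠ 0 := by
      intro h0
      have hav : a = r := hc.dist_eq_zero_iff.mp (by omega)
      have hbv : b = r := hc.dist_eq_zero_iff.mp (by omega)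
      exact hadj.ne (hav.trans hbv.symm)
    obtain ⟨q, hq, hql⟩ := exists_geodesic_path hc b r
    by_cases hmem : a ∈ q.support
    · have hsplit := q.take_spec hmem
      have hlen : (q.takeUntil a hmem).length + (q.dropUntil a hmem).length = q.length := by
        rw [← Walk.length_append, hsplit]
      have h5 : T.dist a r ≤ (q.dropUntil a hmem).length := dist_le _
      have h6 : 0 < (q.takeUntil a hmem).length := by
        rcases Nat.eq_zero_or_pos (q.takeUntil a hmem).length with h | h
        · exact absurd (Walk.eq_of_length_eq_zero h).symm hadj.ne
        · exact h
      omega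
    · have hP : (SimpleGraph.Walk.cons hadj q).IsPath := hq.cons hmem
      obtain ⟨p0, hp0, hp0l⟩ := exists_geodesic_path hc a r
      have := ((isTree_iff_existsUnique_path.mp ⟨hc, ha⟩).2 a r).unique hP hp0
      have hl : (SimpleGraph.Walk.cons hadj q).length = p0.length := by rw [this]
      simp only [Walk.length_cons] at hl
      omega
  omega

lemma adj_parent_or (hc : T.Connected) (ha : T.IsAcyclic) {a b : V} (hadj : T.Adj a b) :
    parent hc a = b ∨ parent hc b = a := by
  rcases adj_dist_cases hc ha hadj with h | h
  · exact Or.inl (parent_unique hc ha hadj h)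
  · exact Or.inr (parent_unique hc ha hadj.symm h)

lemma parent_ne (hc : T.Connected) {v : V} (h : v ≠ root hc) : parent hc v ≠ v :=
  fun he => (parent_adj hc h).ne' he

end RootedTree

end BBPf

namespace BBPf

open SimpleGraph

variable {V : Type} {G T : SimpleGraph V}

/-- commuting generators in a RAAG -/
lemma raag_comm {W : Type} {H : SimpleGraph W} {u v : W} (h : H.Adj u v) :
    Commute (raagGen H u) (raagGen H v) := by
  have hrel : (FreeGroup.of u * FreeGroup.of v * (FreeGroup.of u)⁻¹ * (FreeGroup.of v)⁻¹ :
      FreeGroup W) ∈ Subgroup.normalClosure (raagRels H) :=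
    Subgroup.subset_normalClosure ⟨u, v, h, rfl⟩
  have h1 : (PresentedGroup.mk (raagRels H))
      (FreeGroup.of u * FreeGroup.of v * (FreeGroup.of u)⁻¹ * (FreeGroup.of v)⁻¹) = 1 := by
    apply (QuotientGroup.eq_one_iff _).mpr hrel
  simp only [map_mul, map_inv] at h1
  have h2 : (raagGen H u) * (raagGen H v) * (raagGen H u)⁻¹ * (raagGen H v)⁻¹ = 1 := h1
  have h3 := congrArg (· * (raagGen H v * raagGen H u)) h2
  have h4 : raagGen H u * raagGen H v = raagGen H v * raagGen H u := by
    simpa [mul_assoc] using h3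
  exact h4

section Edges

lemma exists_tip (hc : T.Connected) (ha : T.IsAcyclic) (e : T.edgeSet) :
    ∃ v, v ≠ root hc ∧ (e : Sym2 V) = s(v, parent hc v) := by
  obtain ⟨e, he⟩ := e
  induction e with
  | _ a b =>
    have hadj : T.Adj a b := he
    rcases adj_parent_or hc ha hadj with h | h
    · refine ⟨a, fun hr => ?_, ?_⟩
      · subst hr; rw [parent_root] at h; exact hadj.ne h
      · show s(a, b) = s(a, parent hc a)
        rw [h]
    · refine ⟨b, fun hr => ?_, ?_⟩
      · subst hr; rw [parent_root] at h; exact hadj.ne h.symm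
      · show s(a, b) = s(b, parent hc b)
        rw [h, Sym2.eq_swap]

/-- the endpoint of a tree edge further from the root -/
noncomputable def tip (hc : T.Connected) (ha : T.IsAcyclic) (e : T.edgeSet) : V :=
  (exists_tip hc ha e).choose

lemma tip_ne_root (hc : T.Connected) (ha : T.IsAcyclic) (e : T.edgeSet) :
    tip hc ha e ≠ root hc :=
  (exists_tip hc ha e).choose_spec.1

lemma edge_eq (hc : T.Connected) (ha : T.IsAcyclic) (e : T.edgeSet) :
    (e : Sym2 V) = s(tip hc ha e, parent hc (tip hc ha e)) :=
  (exists_tip hc ha e).choose_spec.2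

lemma tip_unique (hc : T.Connected) (ha : T.IsAcyclic) {e : T.edgeSet} {v : V}
    (hv : v ≠ root hc) (he : (e : Sym2 V) = s(v, parent hc v)) : tip hc ha e = v := by
  have h1 := edge_eq hc ha e
  rw [he] at h1
  rw [Sym2.eq_iff] at h1
  rcases h1 with ⟨h, -⟩ | ⟨h1, h2⟩
  · exact h.symm
  · exfalso
    have d1 := parent_dist hc hv
    have d2 := parent_dist hc (tip_ne_root hc ha e)
    rw [← h2] at d2 h1
    rw [← h1] at d2
    omega

/-- the tree edge from a non-root vertex to its parent -/
noncomputable def E (hc : T.Connected) {v : V} (h : v ≠ root hc) : T.edgeSet :=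
  ⟨s(v, parent hc v), (T.mem_edgeSet).mpr (parent_adj hc h)⟩

lemma tip_E (hc : T.Connected) (ha : T.IsAcyclic) {v : V} (h : v ≠ root hc) :
    tip hc ha (E hc h) = v :=
  tip_unique hc ha h rfl

lemma E_tip (hc : T.Connected) (ha : T.IsAcyclic) (e : T.edgeSet) :
    E hc (tip_ne_root hc ha e) = e :=
  Subtype.ext (edge_eq hc ha e).symm

end Edges

section GroupSide

variable (hs : IsTree2Spanner G T)

/-- generator of the dual RAAG -/
noncomputable def xg (hc : T.Connected) (ha : T.IsAcyclic) (v : V) : RAAG (dualGraph G T) :=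
  letI := Classical.dec (v = root hc)
  if h : v = root hc then 1 else PresentedGroup.of (E hc h)

lemma xg_spec (hc : T.Connected) (ha : T.IsAcyclic) {v : V} (h : v ≠ root hc) :
    xg (G := G) hc ha v = PresentedGroup.of (E hc h) := by
  rw [xg, dif_neg h]

/-- the product of the tree-edge generators along the path to the root -/
noncomputable def yg (hc : T.Connected) (ha : T.IsAcyclic) (v : V) : RAAG (dualGraph G T) :=
  letI := Classical.dec (v = root hc)
  if h : v = root hc then 1 else xg hc ha v * yg hc ha (parent hc v)
termination_by T.dist v (root hc)
decreasing_by
  have := parent_dist hc h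
  omega

/-- the reversed product -/
noncomputable def yg' (hc : T.Connected) (ha : T.IsAcyclic) (v : V) : RAAG (dualGraph G T) :=
  letI := Classical.dec (v = root hc)
  if h : v = root hc then 1 else yg' hc ha (parent hc v) * xg hc ha v
termination_by T.dist v (root hc)
decreasing_by
  have := parent_dist hc h
  omega

lemma yg_root (hc : T.Connected) (ha : T.IsAcyclic) :
    yg (G := G) hc ha (root hc) = 1 := by
  rw [yg, dif_pos rfl]

lemma yg_spec (hc : T.Connected) (ha : T.IsAcyclic) {v : V} (h : v ≠ root hc) :
    yg (G := G) hc ha v = xg hc ha v * yg hc ha (parent hc v) := by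
  rw [yg]; exact dif_neg h

lemma yg'_root (hc : T.Connected) (ha : T.IsAcyclic) :
    yg' (G := G) hc ha (root hc) = 1 := by
  rw [yg', dif_pos rfl]

lemma yg'_spec (hc : T.Connected) (ha : T.IsAcyclic) {v : V} (h : v ≠ root hc) :
    yg' (G := G) hc ha v = yg' hc ha (parent hc v) * xg hc ha v := by
  rw [yg']; exact dif_neg h

end GroupSide

section CaseAnalysis

lemma shared_vertex {e f : T.edgeSet} {a b c : V} (hne : e ≠ f)
    (hm : (e : Sym2 V) ∈ ({s(a, b), s(b, c), s(a, c)} : Set (Sym2 V)))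
    (hm' : (f : Sym2 V) ∈ ({s(a, b), s(b, c), s(a, c)} : Set (Sym2 V))) :
    ∃ m, m ∈ (e : Sym2 V) ∧ m ∈ (f : Sym2 V) := by
  have hnv : (e : Sym2 V) ≠ (f : Sym2 V) := fun h => hne (Subtype.ext h)
  simp only [Set.mem_insert_iff, Set.mem_singleton_iff] at hm hm'
  rcases hm with h1 | h1 | h1 <;> rcases hm' with h2 | h2 | h2
  · exact absurd (h1.trans h2.symm) hnv
  · exact ⟨b, by rw [h1]; simp, by rw [h2]; simp⟩
  · exact ⟨a, by rw [h1]; simp, by rw [h2]; simp⟩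
  · exact ⟨b, by rw [h1]; simp, by rw [h2]; simp⟩
  · exact absurd (h1.trans h2.symm) hnv
  · exact ⟨c, by rw [h1]; simp, by rw [h2]; simp⟩
  · exact ⟨a, by rw [h1]; simp, by rw [h2]; simp⟩
  · exact ⟨c, by rw [h1]; simp, by rw [h2]; simp⟩
  · exact absurd (h1.trans h2.symm) hnv

lemma dual_tip_cases (hc : T.Connected) (ha : T.IsAcyclic) {e f : T.edgeSet}
    (h : (dualGraph G T).Adj e f) :
    parent hc (tip hc ha e) = tip hc ha f ∨ parent hc (tip hc ha f) = tip hc ha e ∨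
      parent hc (tip hc ha e) = parent hc (tip hc ha f) := by
  rw [dualGraph, SimpleGraph.fromRel_adj] at h
  obtain ⟨hne, hrel⟩ := h
  have hshared : ∃ m, m ∈ (e : Sym2 V) ∧ m ∈ (f : Sym2 V) := by
    rcases hrel with ⟨a, b, c, -, -, -, hm, hm'⟩ | ⟨a, b, c, -, -, -, hm, hm'⟩
    · exact shared_vertex hne hm hm'
    · obtain ⟨m, h1, h2⟩ := shared_vertex hne.symm hm hm'
      exact ⟨m, h2, h1⟩
  obtain ⟨m, hme, hmf⟩ := hshared
  rw [edge_eq hc ha e, Sym2.mem_iff] at hme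
  rw [edge_eq hc ha f, Sym2.mem_iff] at hmf
  have htt : tip hc ha e ≠ tip hc ha f := by
    intro hteq
    apply hne
    apply Subtype.ext
    rw [edge_eq hc ha e, edge_eq hc ha f, hteq]
  rcases hme with rfl | rfl
  · rcases hmf with h2 | h2
    · exact absurd h2 htt
    · exact Or.inr (Or.inl h2.symm)
  · rcases hmf with h2 | h2
    · exact Or.inl h2
    · exact Or.inr (Or.inr h2)

end CaseAnalysis

section CommuteHelpers

variable {Gp : Type*} [Group Gp]

lemma commute_conj {a b c : Gp} (h : Commute a b) :
    Commute (c⁻¹ * a * c) (c⁻¹ * b * c) := by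
  have h1 : c⁻¹ * a * c * (c⁻¹ * b * c) = c⁻¹ * (a * b) * c := by group
  have h2 : c⁻¹ * b * c * (c⁻¹ * a * c) = c⁻¹ * (b * a) * c := by group
  unfold Commute SemiconjBy
  rw [h1, h2, h.eq]

lemma conj_eq_of_commute {a b : Gp} (h : Commute a b) : b⁻¹ * a * b = a := by
  rw [mul_assoc, h.eq, ← mul_assoc, inv_mul_cancel, one_mul]

end CommuteHelpers

section Twist

variable (hc : T.Connected) (ha : T.IsAcyclic)

lemma xg_tip (e : T.edgeSet) :
    xg (G := G) hc ha (tip hc ha e) = PresentedGroup.of e := by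
  rw [xg_spec hc ha (tip_ne_root hc ha e), E_tip]

/-- generator images of the twisting endomorphism α -/
noncomputable def falpha (e : T.edgeSet) : RAAG (dualGraph G T) :=
  (yg hc ha (parent hc (tip hc ha e)))⁻¹ * PresentedGroup.of e *
    yg hc ha (parent hc (tip hc ha e))

/-- generator images of the inverse twisting endomorphism β -/
noncomputable def fbeta (e : T.edgeSet) : RAAG (dualGraph G T) :=
  yg' hc ha (parent hc (tip hc ha e)) * PresentedGroup.of e *
    (yg' hc ha (parent hc (tip hc ha e)))⁻¹

lemma falpha_case1 {e f : T.edgeSet}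
    (hgen : Commute (PresentedGroup.of e : RAAG (dualGraph G T)) (PresentedGroup.of f))
    (h1 : parent hc (tip hc ha e) = tip hc ha f) :
    falpha (G := G) hc ha e =
      (yg hc ha (parent hc (tip hc ha f)))⁻¹ * PresentedGroup.of e *
        yg hc ha (parent hc (tip hc ha f)) := by
  have step : falpha (G := G) hc ha e =
      (yg hc ha (parent hc (tip hc ha f)))⁻¹ *
        ((PresentedGroup.of f)⁻¹ * PresentedGroup.of e * PresentedGroup.of f) *
        yg hc ha (parent hc (tip hc ha f)) := by
    rw [falpha, h1, yg_spec hc ha (tip_ne_root hc ha f), xg_tip]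
    group
  rw [step, conj_eq_of_commute hgen]

lemma fbeta_case1 {e f : T.edgeSet}
    (hgen : Commute (PresentedGroup.of e : RAAG (dualGraph G T)) (PresentedGroup.of f))
    (h1 : parent hc (tip hc ha e) = tip hc ha f) :
    fbeta (G := G) hc ha e =
      yg' hc ha (parent hc (tip hc ha f)) * PresentedGroup.of e *
        (yg' hc ha (parent hc (tip hc ha f)))⁻¹ := by
  have step : fbeta (G := G) hc ha e =
      yg' hc ha (parent hc (tip hc ha f)) *
        (PresentedGroup.of f * PresentedGroup.of e * (PresentedGroup.of f)⁻¹) *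
        (yg' hc ha (parent hc (tip hc ha f)))⁻¹ := by
    rw [fbeta, h1, yg'_spec hc ha (tip_ne_root hc ha f), xg_tip]
    group
  have hc2 : (PresentedGroup.of f : RAAG (dualGraph G T)) * PresentedGroup.of e *
      (PresentedGroup.of f)⁻¹ = PresentedGroup.of e := by
    rw [← hgen.eq, mul_assoc, mul_inv_cancel, mul_one]
  rw [step, hc2]

lemma commute_conj' {Gp : Type*} [Group Gp] {a b c : Gp} (h : Commute a b) :
    Commute (c * a * c⁻¹) (c * b * c⁻¹) := by
  have := commute_conj (c := c⁻¹) h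
  simpa using this

lemma falpha_commute {e f : T.edgeSet} (h : (dualGraph G T).Adj e f) :
    Commute (falpha (G := G) hc ha e) (falpha hc ha f) := by
  have hgen : Commute (PresentedGroup.of e : RAAG (dualGraph G T)) (PresentedGroup.of f) :=
    raag_comm h
  rcases dual_tip_cases hc ha h with h1 | h1 | h1
  · rw [falpha_case1 hc ha hgen h1, falpha]
    exact commute_conj hgen
  · rw [falpha_case1 hc ha hgen.symm h1, falpha]
    exact (commute_conj hgen.symm).symm
  · rw [falpha, falpha, h1]
    exact commute_conj hgen

lemma fbeta_commute {e f : T.edgeSet} (h : (dualGraph G T).Adj e f) :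
    Commute (fbeta (G := G) hc ha e) (fbeta hc ha f) := by
  have hgen : Commute (PresentedGroup.of e : RAAG (dualGraph G T)) (PresentedGroup.of f) :=
    raag_comm h
  rcases dual_tip_cases hc ha h with h1 | h1 | h1
  · rw [fbeta_case1 hc ha hgen h1, fbeta]
    exact commute_conj' hgen
  · rw [fbeta_case1 hc ha hgen.symm h1, fbeta]
    exact (commute_conj' hgen.symm).symm
  · rw [fbeta, fbeta, h1]
    exact commute_conj' hgen

/-- the twisting endomorphism α -/
noncomputable def alphaHom : RAAG (dualGraph G T) →* RAAG (dualGraph G T) :=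
  PresentedGroup.toGroup (f := falpha hc ha) (by
    rintro r ⟨e, f, hef, rfl⟩
    simp only [map_mul, map_inv, FreeGroup.lift_apply_of]
    rw [(falpha_commute hc ha hef).eq]
    group)

/-- the twisting endomorphism β -/
noncomputable def betaHom : RAAG (dualGraph G T) →* RAAG (dualGraph G T) :=
  PresentedGroup.toGroup (f := fbeta hc ha) (by
    rintro r ⟨e, f, hef, rfl⟩
    simp only [map_mul, map_inv, FreeGroup.lift_apply_of]
    rw [(fbeta_commute hc ha hef).eq]
    group)

lemma alpha_of (e : T.edgeSet) :
    alphaHom (G := G) hc ha (PresentedGroup.of e) = falpha hc ha e :=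
  PresentedGroup.toGroup.of _

lemma beta_of (e : T.edgeSet) :
    betaHom (G := G) hc ha (PresentedGroup.of e) = fbeta hc ha e :=
  PresentedGroup.toGroup.of _

lemma alpha_xg {v : V} (h : v ≠ root hc) :
    alphaHom (G := G) hc ha (xg hc ha v) =
      (yg hc ha (parent hc v))⁻¹ * xg hc ha v * yg hc ha (parent hc v) := by
  rw [xg_spec hc ha h, alpha_of, falpha, tip_E hc ha h, ← xg_spec hc ha h]

lemma beta_xg {v : V} (h : v ≠ root hc) :
    betaHom (G := G) hc ha (xg hc ha v) =
      yg' hc ha (parent hc v) * xg hc ha v * (yg' hc ha (parent hc v))⁻¹ := by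
  rw [xg_spec hc ha h, beta_of, fbeta, tip_E hc ha h, ← xg_spec hc ha h]

lemma alpha_yg' (v : V) : alphaHom (G := G) hc ha (yg' hc ha v) = yg hc ha v := by
  by_cases h : v = root hc
  · subst h
    rw [yg'_root, yg_root, map_one]
  · rw [yg'_spec hc ha h, map_mul, alpha_yg' (parent hc v), alpha_xg hc ha h,
      yg_spec hc ha h]
    group
termination_by T.dist v (root hc)
decreasing_by
  have := parent_dist hc h
  omega

lemma beta_yg (v : V) : betaHom (G := G) hc ha (yg hc ha v) = yg' hc ha v := by
  by_cases h : v = root hc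
  · subst h
    rw [yg'_root, yg_root, map_one]
  · rw [yg_spec hc ha h, map_mul, beta_yg (parent hc v), beta_xg hc ha h,
      yg'_spec hc ha h]
    group
termination_by T.dist v (root hc)
decreasing_by
  have := parent_dist hc h
  omega

lemma beta_alpha :
    (betaHom (G := G) hc ha).comp (alphaHom hc ha) = MonoidHom.id _ := by
  apply PresentedGroup.ext
  intro e
  simp only [MonoidHom.comp_apply, MonoidHom.id_apply]
  rw [alpha_of, falpha, map_mul, map_mul, map_inv, beta_of, fbeta, beta_yg]
  group

lemma alpha_beta :
    (alphaHom (G := G) hc ha).comp (betaHom hc ha) = MonoidHom.id _ := by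
  apply PresentedGroup.ext
  intro e
  simp only [MonoidHom.comp_apply, MonoidHom.id_apply]
  rw [beta_of, fbeta, map_mul, map_mul, map_inv, alpha_of, falpha, alpha_yg']
  group

/-- the twisting automorphism -/
noncomputable def alphaEquiv : RAAG (dualGraph G T) ≃* RAAG (dualGraph G T) :=
  MonoidHom.toMulEquiv (alphaHom hc ha) (betaHom hc ha) (beta_alpha hc ha) (alpha_beta hc ha)

lemma alphaEquiv_apply (g : RAAG (dualGraph G T)) :
    alphaEquiv (G := G) hc ha g = alphaHom hc ha g := rfl

lemma alphaEquiv_symm_apply (g : RAAG (dualGraph G T)) :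
    (alphaEquiv (G := G) hc ha).symm g = betaHom hc ha g := rfl

end Twist

section RTwo

lemma dual_adj_of_triangle {p q : T.edgeSet} (hne : p ≠ q) {a b c : V}
    (h1 : G.Adj a b) (h2 : G.Adj b c) (h3 : G.Adj a c)
    (hp : (p : Sym2 V) ∈ ({s(a, b), s(b, c), s(a, c)} : Set (Sym2 V)))
    (hq : (q : Sym2 V) ∈ ({s(a, b), s(b, c), s(a, c)} : Set (Sym2 V))) :
    (dualGraph G T).Adj p q := by
  rw [dualGraph, SimpleGraph.fromRel_adj]
  exact ⟨hne, Or.inl ⟨a, b, c, h1, h2, h3, hp, hq⟩⟩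

lemma E_ne_of_tip_ne (hc : T.Connected) (ha : T.IsAcyclic) {v w : V}
    (hv : v ≠ root hc) (hw : w ≠ root hc) (hne : v ≠ w) :
    E hc hv ≠ E hc hw := by
  intro h
  exact hne (by rw [← tip_E hc ha hv, h, tip_E hc ha hw])

lemma E_coe (hc : T.Connected) {v : V} (hv : v ≠ root hc) :
    (E hc hv : Sym2 V) = s(v, parent hc v) := rfl

/-- The main combinatorial identity, needing the tree 2-spanner property. -/
lemma R2 (hc : T.Connected) (ha : T.IsAcyclic) (hle : T ≤ G)
    (hsp : ∀ x y : V, T.dist x y ≤ 2 * G.dist x y)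
    {v w : V} (hvw : G.Adj v w) :
    yg hc ha v * alphaHom hc ha (yg hc ha w) =
      yg hc ha w * alphaHom (G := G) hc ha (yg hc ha v) := by
  have hne : v ≠ w := hvw.ne
  have hdG : G.dist v w = 1 := SimpleGraph.dist_eq_one_iff_adj.mpr hvw
  have hd2 : T.dist v w ≤ 2 := by
    have := hsp v w
    omega
  have hd0 : T.dist v w ≠ 0 := fun h => hne (hc.dist_eq_zero_iff.mp h)
  rcases Nat.lt_or_ge (T.dist v w) 2 with hlt | hge
  · -- tree distance one : v and w are tree-adjacent
    have h1 : T.dist v w = 1 := by omega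
    have hadj : T.Adj v w := SimpleGraph.dist_eq_one_iff_adj.mp h1
    rcases adj_parent_or hc ha hadj with hp | hp
    · have hvr : v ≠ root hc := by
        intro h
        exact hadj.ne (by rw [← hp, h, parent_root])
      have hyv : yg (G := G) hc ha v = xg hc ha v * yg hc ha w := by
        rw [yg_spec hc ha hvr, hp]
      have hav : alphaHom (G := G) hc ha (yg hc ha v) =
          (yg hc ha w)⁻¹ * xg hc ha v * yg hc ha w * alphaHom hc ha (yg hc ha w) := by
        rw [yg_spec hc ha hvr, hp, map_mul, alpha_xg hc ha hvr, hp]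
      rw [hav, hyv]
      group
    · have hwr : w ≠ root hc := by
        intro h
        exact hadj.ne' (by rw [← hp, h, parent_root])
      have hyw : yg (G := G) hc ha w = xg hc ha w * yg hc ha v := by
        rw [yg_spec hc ha hwr, hp]
      have haw : alphaHom (G := G) hc ha (yg hc ha w) =
          (yg hc ha v)⁻¹ * xg hc ha w * yg hc ha v * alphaHom hc ha (yg hc ha v) := by
        rw [yg_spec hc ha hwr, hp, map_mul, alpha_xg hc ha hwr, hp]
      rw [haw, hyw]
      group
  · -- tree distance two
    have h2 : T.dist v w = 2 := by omega
    obtain ⟨p, hp⟩ := hc.exists_walk_length_eq_dist v w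
    rw [h2] at hp
    obtain ⟨m, hadj1, hadj2⟩ : ∃ m, T.Adj v m ∧ T.Adj m w := by
      cases p with
      | nil => simp at hp
      | cons h q =>
        cases q with
        | nil => simp at hp
        | cons h' q' =>
          cases q' with
          | nil => exact ⟨_, h, h'⟩
          | cons h'' q'' => simp [Nat.add_eq, Nat.succ_eq_add_one] at hp
    rcases adj_parent_or hc ha hadj1 with hp1 | hp1 <;>
      rcases adj_parent_or hc ha hadj2 with hp2 | hp2
    · -- grandparent : parent v = m, parent m = w
      have hvr : v ≠ root hc := by
        intro h
        exact hadj1.ne (by rw [← hp1, h, parent_root])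
      have hmr : m ≠ root hc := by
        intro h
        exact hadj2.ne (by rw [← hp2, h, parent_root])
      have hgvm : G.Adj v m := hp1 ▸ hle (parent_adj hc hvr)
      have hgmw : G.Adj m w := hp2 ▸ hle (parent_adj hc hmr)
      have hdual : (dualGraph G T).Adj (E hc hvr) (E hc hmr) := by
        refine dual_adj_of_triangle (E_ne_of_tip_ne hc ha hvr hmr hadj1.ne)
          (a := v) (b := m) (c := w) hgvm hgmw hvw ?_ ?_
        · rw [E_coe hc hvr, hp1]; simp
        · rw [E_coe hc hmr, hp2]; simp
      have hcomm : Commute (xg (G := G) hc ha v) (xg hc ha m) := by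
        rw [xg_spec hc ha hvr, xg_spec hc ha hmr]
        exact raag_comm hdual
      have hym : yg (G := G) hc ha m = xg hc ha m * yg hc ha w := by
        rw [yg_spec hc ha hmr, hp2]
      have hyv : yg (G := G) hc ha v = xg hc ha v * (xg hc ha m * yg hc ha w) := by
        rw [yg_spec hc ha hvr, hp1, hym]
      have ham : alphaHom (G := G) hc ha (yg hc ha m) =
          (yg hc ha w)⁻¹ * xg hc ha m * yg hc ha w * alphaHom hc ha (yg hc ha w) := by
        rw [yg_spec hc ha hmr, hp2, map_mul, alpha_xg hc ha hmr, hp2]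
      have hav : alphaHom (G := G) hc ha (yg hc ha v) =
          (yg hc ha m)⁻¹ * xg hc ha v * yg hc ha m *
            ((yg hc ha w)⁻¹ * xg hc ha m * yg hc ha w * alphaHom hc ha (yg hc ha w)) := by
        rw [yg_spec hc ha hvr, hp1, map_mul, alpha_xg hc ha hvr, hp1, ham]
      have hL : yg (G := G) hc ha v * alphaHom hc ha (yg hc ha w) =
          xg hc ha v * xg hc ha m * (yg hc ha w * alphaHom hc ha (yg hc ha w)) := by
        rw [hyv]; group
      have hR : yg (G := G) hc ha w * alphaHom hc ha (yg hc ha v) =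
          ((xg hc ha m)⁻¹ * xg hc ha v * xg hc ha m) * xg hc ha m *
            (yg hc ha w * alphaHom hc ha (yg hc ha w)) := by
        rw [hav, hym]; group
      rw [hL, hR, conj_eq_of_commute hcomm]
    · -- siblings : parent v = m, parent w = m
      have hvr : v ≠ root hc := by
        intro h
        exact hadj1.ne (by rw [← hp1, h, parent_root])
      have hwr : w ≠ root hc := by
        intro h
        exact hadj2.ne' (by rw [← hp2, h, parent_root])
      have hgvm : G.Adj v m := hp1 ▸ hle (parent_adj hc hvr)
      have hgwm : G.Adj w m := hp2 ▸ hle (parent_adj hc hwr)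
      have hdual : (dualGraph G T).Adj (E hc hvr) (E hc hwr) := by
        refine dual_adj_of_triangle (E_ne_of_tip_ne hc ha hvr hwr hne)
          (a := v) (b := m) (c := w) hgvm hgwm.symm hvw ?_ ?_
        · rw [E_coe hc hvr, hp1]; simp
        · rw [E_coe hc hwr, hp2]
          rw [show s(w, m) = s(m, w) from Sym2.eq_swap]; simp
      have hcomm : Commute (xg (G := G) hc ha v) (xg hc ha w) := by
        rw [xg_spec hc ha hvr, xg_spec hc ha hwr]
        exact raag_comm hdual
      have hyv : yg (G := G) hc ha v = xg hc ha v * yg hc ha m := by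
        rw [yg_spec hc ha hvr, hp1]
      have hyw : yg (G := G) hc ha w = xg hc ha w * yg hc ha m := by
        rw [yg_spec hc ha hwr, hp2]
      have hav : alphaHom (G := G) hc ha (yg hc ha v) =
          (yg hc ha m)⁻¹ * xg hc ha v * yg hc ha m * alphaHom hc ha (yg hc ha m) := by
        rw [yg_spec hc ha hvr, hp1, map_mul, alpha_xg hc ha hvr, hp1]
      have haw : alphaHom (G := G) hc ha (yg hc ha w) =
          (yg hc ha m)⁻¹ * xg hc ha w * yg hc ha m * alphaHom hc ha (yg hc ha m) := by
        rw [yg_spec hc ha hwr, hp2, map_mul, alpha_xg hc ha hwr, hp2]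
      have hL : yg (G := G) hc ha v * alphaHom hc ha (yg hc ha w) =
          xg hc ha v * xg hc ha w * (yg hc ha m * alphaHom hc ha (yg hc ha m)) := by
        rw [hyv, haw]; group
      have hR : yg (G := G) hc ha w * alphaHom hc ha (yg hc ha v) =
          xg hc ha w * xg hc ha v * (yg hc ha m * alphaHom hc ha (yg hc ha m)) := by
        rw [hyw, hav]; group
      rw [hL, hR, hcomm.eq]
    · -- impossible : parent m = v, parent m = w
      exact absurd (hp1.symm.trans hp2) hne
    · -- other grandparent : parent m = v, parent w = m
      have hmr : m ≠ root hc := by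
        intro h
        exact hadj1.ne' (by rw [← hp1, h, parent_root])
      have hwr : w ≠ root hc := by
        intro h
        exact hadj2.ne' (by rw [← hp2, h, parent_root])
      have hgmv : G.Adj m v := hp1 ▸ hle (parent_adj hc hmr)
      have hgwm : G.Adj w m := hp2 ▸ hle (parent_adj hc hwr)
      have hdual : (dualGraph G T).Adj (E hc hwr) (E hc hmr) := by
        refine dual_adj_of_triangle (E_ne_of_tip_ne hc ha hwr hmr hadj2.ne')
          (a := w) (b := m) (c := v) hgwm hgmv hvw.symm ?_ ?_
        · rw [E_coe hc hwr, hp2]; simp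
        · rw [E_coe hc hmr, hp1]; simp
      have hcomm : Commute (xg (G := G) hc ha w) (xg hc ha m) := by
        rw [xg_spec hc ha hwr, xg_spec hc ha hmr]
        exact raag_comm hdual
      have hym : yg (G := G) hc ha m = xg hc ha m * yg hc ha v := by
        rw [yg_spec hc ha hmr, hp1]
      have hyw : yg (G := G) hc ha w = xg hc ha w * (xg hc ha m * yg hc ha v) := by
        rw [yg_spec hc ha hwr, hp2, hym]
      have ham : alphaHom (G := G) hc ha (yg hc ha m) =
          (yg hc ha v)⁻¹ * xg hc ha m * yg hc ha v * alphaHom hc ha (yg hc ha v) := by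
        rw [yg_spec hc ha hmr, hp1, map_mul, alpha_xg hc ha hmr, hp1]
      have haw : alphaHom (G := G) hc ha (yg hc ha w) =
          (yg hc ha m)⁻¹ * xg hc ha w * yg hc ha m *
            ((yg hc ha v)⁻¹ * xg hc ha m * yg hc ha v * alphaHom hc ha (yg hc ha v)) := by
        rw [yg_spec hc ha hwr, hp2, map_mul, alpha_xg hc ha hwr, hp2, ham]
      have hL : yg (G := G) hc ha v * alphaHom hc ha (yg hc ha w) =
          ((xg hc ha m)⁻¹ * xg hc ha w * xg hc ha m) * xg hc ha m *
            (yg hc ha v * alphaHom hc ha (yg hc ha v)) := by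
        rw [haw, hym]; group
      have hR : yg (G := G) hc ha w * alphaHom hc ha (yg hc ha v) =
          xg hc ha w * xg hc ha m * (yg hc ha v * alphaHom hc ha (yg hc ha v)) := by
        rw [hyw]; group
      rw [hL, hR, conj_eq_of_commute hcomm]

end RTwo

section Psi

variable (hc : T.Connected) (ha : T.IsAcyclic)

/-- the action of `ℤ` on the dual RAAG by powers of the twisting automorphism -/
noncomputable def phiA : Multiplicative ℤ →* MulAut (RAAG (dualGraph G T)) :=
  zpowersHom (MulAut (RAAG (dualGraph G T))) (alphaEquiv hc ha)

lemma phiA_one_apply (g : RAAG (dualGraph G T)) :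
    phiA (G := G) hc ha (Multiplicative.ofAdd 1) g = alphaHom hc ha g := by
  have h1 : phiA (G := G) hc ha (Multiplicative.ofAdd 1) = alphaEquiv hc ha := by
    rw [phiA, zpowersHom_apply]
    simp
  rw [h1, alphaEquiv_apply]

lemma phiA_comp_apply (u v : Multiplicative ℤ) (g : RAAG (dualGraph G T)) :
    phiA (G := G) hc ha u (phiA hc ha v g) = phiA hc ha (u * v) g := by
  rw [map_mul, MulAut.mul_apply]

lemma bbgChar_of (v : V) : bbgChar G (raagGen G v) = Multiplicative.ofAdd 1 :=
  PresentedGroup.toGroup.of _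

/-- the homomorphism from `A(Γ)` to the semidirect product -/
noncomputable def Psi (hle : T ≤ G) (hsp : ∀ x y : V, T.dist x y ≤ 2 * G.dist x y) :
    RAAG G →* RAAG (dualGraph G T) ⋊[phiA (G := G) hc ha] Multiplicative ℤ :=
  PresentedGroup.toGroup
    (f := fun v => ⟨yg hc ha v, Multiplicative.ofAdd 1⟩) (by
    rintro r ⟨v, w, hvw, rfl⟩
    simp only [map_mul, map_inv, FreeGroup.lift_apply_of]
    have hcom : (⟨yg hc ha v, Multiplicative.ofAdd 1⟩ :
          RAAG (dualGraph G T) ⋊[phiA (G := G) hc ha] Multiplicative ℤ) *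
        ⟨yg hc ha w, Multiplicative.ofAdd 1⟩ =
        ⟨yg hc ha w, Multiplicative.ofAdd 1⟩ * ⟨yg hc ha v, Multiplicative.ofAdd 1⟩ := by
      apply SemidirectProduct.ext
      · show yg hc ha v * phiA hc ha (Multiplicative.ofAdd 1) (yg hc ha w) =
          yg hc ha w * phiA hc ha (Multiplicative.ofAdd 1) (yg hc ha v)
        rw [phiA_one_apply, phiA_one_apply]
        exact R2 hc ha hle hsp hvw
      · rfl
    rw [hcom]
    group)

lemma Psi_of (hle : T ≤ G) (hsp : ∀ x y : V, T.dist x y ≤ 2 * G.dist x y) (v : V) :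
    Psi hc ha hle hsp (raagGen G v) = ⟨yg hc ha v, Multiplicative.ofAdd 1⟩ :=
  PresentedGroup.toGroup.of _

lemma Psi_right (hle : T ≤ G) (hsp : ∀ x y : V, T.dist x y ≤ 2 * G.dist x y)
    (g : RAAG G) : (Psi hc ha hle hsp g).right = bbgChar G g := by
  have h : SemidirectProduct.rightHom.comp (Psi (G := G) hc ha hle hsp) = bbgChar G := by
    apply PresentedGroup.ext
    intro v
    rw [MonoidHom.comp_apply]
    show (Psi hc ha hle hsp (raagGen G v)).right = bbgChar G (raagGen G v)
    rw [Psi_of, bbgChar_of]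
  exact DFunLike.congr_fun h g

/-- the inverse map on the Bestvina–Brady subgroup -/
noncomputable def psi (hle : T ≤ G) (hsp : ∀ x y : V, T.dist x y ≤ 2 * G.dist x y) :
    ↥(BBG G) →* RAAG (dualGraph G T) where
  toFun g := (Psi hc ha hle hsp (g : RAAG G)).left
  map_one' := by
    show (Psi hc ha hle hsp ((1 : ↥(BBG G)) : RAAG G)).left = 1
    rw [OneMemClass.coe_one, map_one]
    rfl
  map_mul' a b := by
    have hra : (Psi hc ha hle hsp (a : RAAG G)).right = 1 := by
      rw [Psi_right]
      exact a.2
    show (Psi hc ha hle hsp ((a * b : ↥(BBG G)) : RAAG G)).left =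
      (Psi hc ha hle hsp (a : RAAG G)).left * (Psi hc ha hle hsp (b : RAAG G)).left
    have hco : ((a * b : ↥(BBG G)) : RAAG G) = (a : RAAG G) * (b : RAAG G) := rfl
    rw [hco, map_mul, SemidirectProduct.mul_left, hra, map_one, MulAut.one_apply]

end Psi

section Phi

variable (hc : T.Connected) (ha : T.IsAcyclic)

lemma raag_commute_of_adjOrEq {W : Type} {H : SimpleGraph W} {a b : W}
    (h : a = b ∨ H.Adj a b) : Commute (raagGen H a) (raagGen H b) := by
  rcases h with rfl | h
  · exact Commute.refl _
  · exact raag_comm h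

lemma endpoints_adjOrEq {e f : T.edgeSet} (h : (dualGraph G T).Adj e f) :
    ∀ x y : V, x ∈ (e : Sym2 V) → y ∈ (f : Sym2 V) → x = y ∨ G.Adj x y := by
  rw [dualGraph, SimpleGraph.fromRel_adj] at h
  obtain ⟨-, hrel⟩ := h
  have main : ∀ (a b c : V), G.Adj a b → G.Adj b c → G.Adj a c →
      (e : Sym2 V) ∈ ({s(a, b), s(b, c), s(a, c)} : Set (Sym2 V)) →
      (f : Sym2 V) ∈ ({s(a, b), s(b, c), s(a, c)} : Set (Sym2 V)) →
      ∀ x y : V, x ∈ (e : Sym2 V) → y ∈ (f : Sym2 V) → x = y ∨ G.Adj x y := by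
    intro a b c h1 h2 h3 hm hm' x y hx hy
    simp only [Set.mem_insert_iff, Set.mem_singleton_iff] at hm hm'
    have hx3 : x = a ∨ x = b ∨ x = c := by
      rcases hm with hh | hh | hh <;> rw [hh, Sym2.mem_iff] at hx <;> tauto
    have hy3 : y = a ∨ y = b ∨ y = c := by
      rcases hm' with hh | hh | hh <;> rw [hh, Sym2.mem_iff] at hy <;> tauto
    rcases hx3 with rfl | rfl | rfl <;> rcases hy3 with rfl | rfl | rfl <;>
      first
        | exact Or.inl rfl
        | exact Or.inr h1
        | exact Or.inr h2
        | exact Or.inr h3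
        | exact Or.inr h1.symm
        | exact Or.inr h2.symm
        | exact Or.inr h3.symm
  rcases hrel with ⟨a, b, c, h1, h2, h3, hm, hm'⟩ | ⟨a, b, c, h1, h2, h3, hm, hm'⟩
  · exact main a b c h1 h2 h3 hm hm'
  · exact main a b c h1 h2 h3 hm' hm

lemma tip_mem (e : T.edgeSet) : tip hc ha e ∈ (e : Sym2 V) := by
  rw [edge_eq hc ha e, Sym2.mem_iff]
  exact Or.inl rfl

lemma parent_tip_mem (e : T.edgeSet) : parent hc (tip hc ha e) ∈ (e : Sym2 V) := by
  rw [edge_eq hc ha e, Sym2.mem_iff]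
  exact Or.inr rfl

/-- the homomorphism from the dual RAAG to `A(Γ)` -/
noncomputable def phiHom : RAAG (dualGraph G T) →* RAAG G :=
  PresentedGroup.toGroup
    (f := fun e => raagGen G (tip hc ha e) * (raagGen G (parent hc (tip hc ha e)))⁻¹) (by
    rintro r ⟨e, f, hef, rfl⟩
    simp only [map_mul, map_inv, FreeGroup.lift_apply_of]
    have hpair := endpoints_adjOrEq hef
    have h11 : Commute (raagGen G (tip hc ha e)) (raagGen G (tip hc ha f)) :=
      raag_commute_of_adjOrEq (hpair _ _ (tip_mem hc ha e) (tip_mem hc ha f))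
    have h12 : Commute (raagGen G (tip hc ha e)) (raagGen G (parent hc (tip hc ha f))) :=
      raag_commute_of_adjOrEq (hpair _ _ (tip_mem hc ha e) (parent_tip_mem hc ha f))
    have h21 : Commute (raagGen G (parent hc (tip hc ha e))) (raagGen G (tip hc ha f)) :=
      raag_commute_of_adjOrEq (hpair _ _ (parent_tip_mem hc ha e) (tip_mem hc ha f))
    have h22 : Commute (raagGen G (parent hc (tip hc ha e)))
        (raagGen G (parent hc (tip hc ha f))) :=
      raag_commute_of_adjOrEq (hpair _ _ (parent_tip_mem hc ha e) (parent_tip_mem hc ha f))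
    have hcom : Commute (raagGen G (tip hc ha e) * (raagGen G (parent hc (tip hc ha e)))⁻¹)
        (raagGen G (tip hc ha f) * (raagGen G (parent hc (tip hc ha f)))⁻¹) :=
      ((h11.mul_right h12.inv_right).mul_left ((h21.mul_right h22.inv_right)).inv_left)
    rw [hcom.eq]
    group)

lemma phiHom_of (e : T.edgeSet) :
    phiHom hc ha (PresentedGroup.of e) =
      raagGen G (tip hc ha e) * (raagGen G (parent hc (tip hc ha e)))⁻¹ :=
  PresentedGroup.toGroup.of _

lemma phiHom_mem (ξ : RAAG (dualGraph G T)) : phiHom hc ha ξ ∈ BBG G := by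
  have h : (bbgChar G).comp (phiHom hc ha) = 1 := by
    apply PresentedGroup.ext
    intro e
    rw [MonoidHom.comp_apply, phiHom_of, map_mul, map_inv, bbgChar_of, bbgChar_of,
      MonoidHom.one_apply, mul_inv_cancel]
  show bbgChar G (phiHom hc ha ξ) = 1
  calc bbgChar G (phiHom hc ha ξ) = ((bbgChar G).comp (phiHom hc ha)) ξ := rfl
    _ = (1 : RAAG (dualGraph G T) →* Multiplicative ℤ) ξ := by rw [h]
    _ = 1 := rfl

/-- the map into the Bestvina-Brady subgroup -/
noncomputable def phiBBG : RAAG (dualGraph G T) →* ↥(BBG G) :=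
  (phiHom hc ha).codRestrict (BBG G) (phiHom_mem hc ha)

lemma yg_div (hc : T.Connected) (ha : T.IsAcyclic) {v : V} (h : v ≠ root hc) :
    yg (G := G) hc ha v * (yg hc ha (parent hc v))⁻¹ = xg hc ha v := by
  rw [yg_spec hc ha h]
  group

lemma psi_phi (hle : T ≤ G) (hsp : ∀ x y : V, T.dist x y ≤ 2 * G.dist x y)
    (ξ : RAAG (dualGraph G T)) : psi hc ha hle hsp (phiBBG hc ha ξ) = ξ := by
  have h : (psi hc ha hle hsp).comp (phiBBG hc ha) = MonoidHom.id _ := by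
    apply PresentedGroup.ext
    intro e
    rw [MonoidHom.comp_apply, MonoidHom.id_apply]
    show (Psi hc ha hle hsp ((phiBBG (G := G) hc ha (PresentedGroup.of e) : ↥(BBG G)) :
      RAAG G)).left = PresentedGroup.of e
    have hcoe : ((phiBBG (G := G) hc ha (PresentedGroup.of e) : ↥(BBG G)) : RAAG G) =
        phiHom hc ha (PresentedGroup.of e) := rfl
    rw [hcoe, phiHom_of, map_mul, map_inv, Psi_of, Psi_of,
      SemidirectProduct.mul_left, SemidirectProduct.inv_left]
    show yg hc ha (tip hc ha e) *
        phiA hc ha (Multiplicative.ofAdd 1)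
          (phiA hc ha (Multiplicative.ofAdd 1)⁻¹ (yg hc ha (parent hc (tip hc ha e)))⁻¹)
      = PresentedGroup.of e
    rw [phiA_comp_apply, mul_inv_cancel, map_one, MulAut.one_apply,
      yg_div hc ha (tip_ne_root hc ha e), xg_tip]
  exact DFunLike.congr_fun h ξ

end Phi

section Surj

variable (hc : T.Connected) (ha : T.IsAcyclic)

/-- the image subgroup -/
noncomputable def Jsub : Subgroup (RAAG G) := (phiHom (G := G) hc ha).range

lemma J_gen_mem {a b : V} (hadj : T.Adj a b) :
    raagGen G a * (raagGen G b)⁻¹ ∈ Jsub hc ha := by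
  set e : T.edgeSet := ⟨s(a, b), hadj⟩ with he
  have hco : (e : Sym2 V) = s(a, b) := rfl
  have h1 := edge_eq hc ha e
  rw [hco, Sym2.eq_iff] at h1
  rcases h1 with ⟨ht, hpp⟩ | ⟨ht, hpp⟩
  · exact ⟨PresentedGroup.of e, by rw [phiHom_of, ← hpp, ← ht]⟩
  · refine ⟨(PresentedGroup.of e)⁻¹, ?_⟩
    rw [map_inv, phiHom_of, ← ht, ← hpp]
    group

lemma J_pair_right (a b : V) : raagGen G a * (raagGen G b)⁻¹ ∈ Jsub hc ha := by
  have key : ∀ {x y : V} (_ : T.Walk x y),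
      raagGen G x * (raagGen G y)⁻¹ ∈ Jsub (G := G) hc ha := by
    intro x y w
    induction w with
    | nil => simpa using one_mem (Jsub (G := G) hc ha)
    | @cons x' m y' hadj p ih =>
      have heq : raagGen G x' * (raagGen G y')⁻¹ =
          (raagGen G x' * (raagGen G m)⁻¹) * (raagGen G m * (raagGen G y')⁻¹) := by
        group
      rw [heq]
      exact mul_mem (J_gen_mem hc ha hadj) ih
  exact key ((hc a b).some)

lemma J_pair_left (hle : T ≤ G) (a b : V) :
    (raagGen G a)⁻¹ * raagGen G b ∈ Jsub hc ha := by
  have key : ∀ {x y : V} (_ : T.Walk x y),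
      (raagGen G x)⁻¹ * raagGen G y ∈ Jsub (G := G) hc ha := by
    intro x y w
    induction w with
    | nil => simpa using one_mem (Jsub (G := G) hc ha)
    | @cons x' m y' hadj p ih =>
      have hcomm : Commute (raagGen G x') (raagGen G m) := raag_comm (hle hadj)
      have heq : (raagGen G x')⁻¹ * raagGen G y' =
          ((raagGen G x')⁻¹ * raagGen G m) * ((raagGen G m)⁻¹ * raagGen G y') := by
        group
      rw [heq, hcomm.inv_left.eq]
      exact mul_mem (J_pair_right hc ha m x') ih
  exact key ((hc a b).some)

lemma J_eq_closure : Jsub (G := G) hc ha =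
    Subgroup.closure (Set.range fun e : T.edgeSet =>
      raagGen G (tip hc ha e) * (raagGen G (parent hc (tip hc ha e)))⁻¹) := by
  rw [Jsub, MonoidHom.range_eq_map, ← PresentedGroup.closure_range_of (raagRels (dualGraph G T)),
    MonoidHom.map_closure]
  congr 1
  rw [← Set.range_comp]
  ext g
  constructor
  · rintro ⟨e, rfl⟩
    exact ⟨e, (phiHom_of hc ha e).symm⟩
  · rintro ⟨e, rfl⟩
    exact ⟨e, phiHom_of hc ha e⟩

lemma J_conj_gen (hle : T ≤ G) (c : V) {j : RAAG G} (hj : j ∈ Jsub hc ha) :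
    raagGen G c * j * (raagGen G c)⁻¹ ∈ Jsub hc ha := by
  have hmap : Subgroup.map (MulAut.conj (raagGen G c)).toMonoidHom (Jsub (G := G) hc ha)
      ≤ Jsub hc ha := by
    nth_rewrite 1 [J_eq_closure hc ha]
    rw [MonoidHom.map_closure, Subgroup.closure_le]
    rintro - ⟨-, ⟨e, rfl⟩, rfl⟩
    simp only [SetLike.mem_coe]
    set a := tip hc ha e
    set b := parent hc (tip hc ha e)
    have hadjab : G.Adj a b := hle (parent_adj hc (tip_ne_root hc ha e))
    have hcomm : Commute (raagGen G a) (raagGen G b) := raag_comm hadjab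
    have heq : (MulAut.conj (raagGen G c)).toMonoidHom (raagGen G a * (raagGen G b)⁻¹) =
        (raagGen G c * (raagGen G b)⁻¹) * (raagGen G a * (raagGen G c)⁻¹) := by
      show raagGen G c * (raagGen G a * (raagGen G b)⁻¹) * (raagGen G c)⁻¹ = _
      rw [show raagGen G a * (raagGen G b)⁻¹ = (raagGen G b)⁻¹ * raagGen G a from
        hcomm.inv_right.eq]
      group
    rw [heq]
    exact mul_mem (J_pair_right hc ha c b) (J_pair_right hc ha a c)
  exact hmap ⟨j, hj, rfl⟩

lemma J_conj_gen_inv (hle : T ≤ G) (c : V) {j : RAAG G} (hj : j ∈ Jsub hc ha) :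
    (raagGen G c)⁻¹ * j * raagGen G c ∈ Jsub hc ha := by
  have hmap : Subgroup.map (MulAut.conj (raagGen G c)⁻¹).toMonoidHom (Jsub (G := G) hc ha)
      ≤ Jsub hc ha := by
    nth_rewrite 1 [J_eq_closure hc ha]
    rw [MonoidHom.map_closure, Subgroup.closure_le]
    rintro - ⟨-, ⟨e, rfl⟩, rfl⟩
    simp only [SetLike.mem_coe]
    set a := tip hc ha e
    set b := parent hc (tip hc ha e)
    have heq : (MulAut.conj (raagGen G c)⁻¹).toMonoidHom (raagGen G a * (raagGen G b)⁻¹) =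
        ((raagGen G c)⁻¹ * raagGen G a) * ((raagGen G b)⁻¹ * raagGen G c) := by
      show (raagGen G c)⁻¹ * (raagGen G a * (raagGen G b)⁻¹) * ((raagGen G c)⁻¹)⁻¹ = _
      group
    rw [heq]
    exact mul_mem (J_pair_left hc ha hle c a) (J_pair_left hc ha hle b c)
  have : j ∈ Subgroup.map (MulAut.conj (raagGen G c)⁻¹).toMonoidHom (Jsub (G := G) hc ha) →
      j ∈ Jsub hc ha := fun h => hmap h
  exact hmap ⟨j, hj, by show (raagGen G c)⁻¹ * j * ((raagGen G c)⁻¹)⁻¹ = _; group⟩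

lemma J_conj_zpow (hle : T ≤ G) (c : V) (k : ℤ) :
    ∀ {j : RAAG G}, j ∈ Jsub hc ha →
      (raagGen G c) ^ k * j * ((raagGen G c) ^ k)⁻¹ ∈ Jsub hc ha := by
  induction k using Int.induction_on with
  | zero => intro j hj; simpa using hj
  | succ k ih =>
    intro j hj
    have heq : (raagGen G c) ^ ((k : ℤ) + 1) * j * ((raagGen G c) ^ ((k : ℤ) + 1))⁻¹ =
        (raagGen G c) ^ (k : ℤ) * (raagGen G c * j * (raagGen G c)⁻¹) *
          ((raagGen G c) ^ (k : ℤ))⁻¹ := by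
      rw [zpow_add_one]
      group
    rw [heq]
    exact ih (J_conj_gen hc ha hle c hj)
  | pred k ih =>
    intro j hj
    have heq : (raagGen G c) ^ (-(k : ℤ) - 1) * j * ((raagGen G c) ^ (-(k : ℤ) - 1))⁻¹ =
        (raagGen G c) ^ (-(k : ℤ)) * ((raagGen G c)⁻¹ * j * raagGen G c) *
          ((raagGen G c) ^ (-(k : ℤ)))⁻¹ := by
      rw [zpow_sub_one]
      group
    rw [heq]
    exact ih (J_conj_gen_inv hc ha hle c hj)

/-- membership in J after cancelling the character -/
noncomputable def Ssub (hle : T ≤ G) : Subgroup (RAAG G) where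
  carrier := {g | g * ((raagGen G (root hc)) ^ (Multiplicative.toAdd (bbgChar G g)))⁻¹
    ∈ Jsub hc ha}
  one_mem' := by
    simp only [Set.mem_setOf_eq, map_one]
    simpa using (one_mem (Jsub (G := G) hc ha))
  mul_mem' := by
    intro a b hb1 hb2
    simp only [Set.mem_setOf_eq, map_mul] at *
    set ka := Multiplicative.toAdd (bbgChar G a)
    set kb := Multiplicative.toAdd (bbgChar G b)
    have htoadd : Multiplicative.toAdd (bbgChar G a * bbgChar G b) = ka + kb := rfl
    rw [htoadd]
    have heq : a * b * ((raagGen G (root hc)) ^ (ka + kb))⁻¹ =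
        (a * ((raagGen G (root hc)) ^ ka)⁻¹) *
          ((raagGen G (root hc)) ^ ka * (b * ((raagGen G (root hc)) ^ kb)⁻¹) *
            ((raagGen G (root hc)) ^ ka)⁻¹) := by
      rw [zpow_add]
      group
    rw [heq]
    exact mul_mem hb1 (J_conj_zpow hc ha hle (root hc) ka hb2)
  inv_mem' := by
    intro a ha1
    simp only [Set.mem_setOf_eq, map_inv] at *
    set ka := Multiplicative.toAdd (bbgChar G a)
    have htoadd : Multiplicative.toAdd (bbgChar G a)⁻¹ = -ka := rfl
    rw [htoadd]
    have heq : a⁻¹ * ((raagGen G (root hc)) ^ (-ka))⁻¹ =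
        (raagGen G (root hc)) ^ (-ka) * (a * ((raagGen G (root hc)) ^ ka)⁻¹)⁻¹ *
          ((raagGen G (root hc)) ^ (-ka))⁻¹ := by
      rw [zpow_neg]
      group
    rw [heq]
    exact J_conj_zpow hc ha hle (root hc) (-ka) (inv_mem ha1)

lemma Ssub_top (hle : T ≤ G) : Ssub (G := G) hc ha hle = ⊤ := by
  rw [eq_top_iff, ← PresentedGroup.closure_range_of (raagRels G), Subgroup.closure_le]
  rintro - ⟨v, rfl⟩
  show raagGen G v * ((raagGen G (root hc)) ^ (Multiplicative.toAdd (bbgChar G (raagGen G v))))⁻¹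
    ∈ Jsub hc ha
  rw [bbgChar_of]
  have h1 : Multiplicative.toAdd (Multiplicative.ofAdd (1 : ℤ)) = 1 := rfl
  rw [h1, zpow_one]
  exact J_pair_right hc ha v (root hc)

lemma BBG_le_J (hle : T ≤ G) {g : RAAG G} (hg : g ∈ BBG G) : g ∈ Jsub hc ha := by
  have hmem : g ∈ Ssub (G := G) hc ha hle := by
    rw [Ssub_top hc ha hle]
    trivial
  have hchar : bbgChar G g = 1 := hg
  have h2 : g * ((raagGen G (root hc)) ^ (Multiplicative.toAdd (bbgChar G g)))⁻¹
      ∈ Jsub hc ha := hmem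
  rw [hchar] at h2
  simpa using h2

lemma phiBBG_surjective (hle : T ≤ G) : Function.Surjective (phiBBG (G := G) hc ha) := by
  intro g
  obtain ⟨ξ, hξ⟩ := BBG_le_J hc ha hle g.2
  exact ⟨ξ, Subtype.ext hξ⟩

end Surj

end BBPf

/-- If a finite simple graph admits a tree 2-spanner `T`, then its Bestvina–Brady group is
isomorphic to the RAAG on the dual graph of `T`; in particular it is a RAAG. -/
theorem stmt_0 {V : Type} [Fintype V] (G T : SimpleGraph V) (hT : IsTree2Spanner G T) :
    Nonempty (↥(BBG G) ≃* RAAG (dualGraph G T)) := by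
  obtain ⟨hle, htree, hsp⟩ := hT
  have hc : T.Connected := htree.1
  have ha : T.IsAcyclic := htree.2
  refine ⟨MulEquiv.symm ?_⟩
  exact
    { toFun := BBPf.phiBBG hc ha
      invFun := BBPf.psi hc ha hle hsp
      left_inv := BBPf.psi_phi hc ha hle hsp
      right_inv := by
        intro g
        obtain ⟨ξ, rfl⟩ := BBPf.phiBBG_surjective hc ha hle g
        rw [BBPf.psi_phi hc ha hle hsp]
      map_mul' := map_mul _ }
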